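/- Second-order perturbation solution: with γ = (ω²−ω)/2 and a = a_k^i − a_k^j, the function B_{k,2}(τ) = ω² γ 𝓑_k^{(3)}(τ) + γ² 𝓑_k^{(2)}(τ), where 𝓑_k^{(2)}(τ) = a⁴ (ξ_k²/(2κ_k²)) ((1 − e^{−2κ_k τ})/κ_k − 2τ e^{−κ_k τ}) and 𝓑_k^{(3)}(τ) = a⁴ ρ_k² ξ_k² ((1 − e^{−κ_k τ})/κ_k³ − τ e^{−κ_k τ}/κ_k² − τ² e^{−κ_k τ}/(2κ_k)), satisfies B_{k,2}' = −κ_k B_{k,2} + ω a ρ_k ξ_k B_{k,1} + (ξ_k²/2) B_{k,0}² with B_{k,2}(0) = 0, where B_{k,0}, B_{k,1} are as in the first-order statement. -/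

import Mathlib

/-- Second-order term of the small vol-of-vol perturbation expansion: with
`γ = (ω²−ω)/2` and `a = a_k^i − a_k^j`, the function
`B₂(τ) = ω² γ 𝓑⁽³⁾(τ) + γ² 𝓑⁽²⁾(τ)`, where
`𝓑⁽²⁾(τ) = a⁴ (ξ²/(2κ²)) ((1 − e^{−2κτ})/κ − 2τ e^{−κτ})` and
`𝓑⁽³⁾(τ) = a⁴ ρ² ξ² ((1 − e^{−κτ})/κ³ − τ e^{−κτ}/κ² − τ² e^{−κτ}/(2κ))`, satisfies
`B₂' = −κ B₂ + ω a ρ ξ B₁ + (ξ²/2) B₀²` with `B₂(0) = 0`. -/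
theorem perturbation_second_order
    (κ ξ ρ a ω : ℝ) (hκ : 0 < κ) (γ : ℝ) (hγ : γ = (ω ^ 2 - ω) / 2)
    (B0 B1 B2 : ℝ → ℝ) (calB2 calB3 : ℝ → ℝ)
    (hB0 : ∀ τ, B0 τ = γ * a ^ 2 * (1 - Real.exp (-κ * τ)) / κ)
    (hB1 : ∀ τ, B1 τ = ω * γ * a ^ 3 * ρ * ξ *
        (1 / κ ^ 2 - Real.exp (-κ * τ) / κ ^ 2 - τ * Real.exp (-κ * τ) / κ))
    (hcalB2 : ∀ τ, calB2 τ = a ^ 4 * (ξ ^ 2 / (2 * κ ^ 2)) *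
        ((1 - Real.exp (-2 * κ * τ)) / κ - 2 * τ * Real.exp (-κ * τ)))
    (hcalB3 : ∀ τ, calB3 τ = a ^ 4 * ρ ^ 2 * ξ ^ 2 *
        ((1 - Real.exp (-κ * τ)) / κ ^ 3 - τ * Real.exp (-κ * τ) / κ ^ 2
          - τ ^ 2 * Real.exp (-κ * τ) / (2 * κ)))
    (hB2 : ∀ τ, B2 τ = ω ^ 2 * γ * calB3 τ + γ ^ 2 * calB2 τ) :
    (∀ τ, HasDerivAt B2
        (-κ * B2 τ + ω * a * ρ * ξ * B1 τ + ξ ^ 2 / 2 * (B0 τ) ^ 2) τ) ∧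
    B2 0 = 0 := by
  constructor
  · intro τ
    have hfun : B2 = fun t => ω ^ 2 * γ * (a ^ 4 * ρ ^ 2 * ξ ^ 2) *
        ((1 - Real.exp (-κ * t)) / κ ^ 3 - t * Real.exp (-κ * t) / κ ^ 2
          - t ^ 2 * Real.exp (-κ * t) / (2 * κ))
        + γ ^ 2 * (a ^ 4 * (ξ ^ 2 / (2 * κ ^ 2))) *
        ((1 - Real.exp (-2 * κ * t)) / κ - 2 * t * Real.exp (-2 * κ * t / 2)) := by
      funext t
      rw [hB2, hcalB2, hcalB3]
      have : -2 * κ * t / 2 = -κ * t := by ring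
      rw [this]
      ring
    have he : HasDerivAt (fun t : ℝ => Real.exp (-κ * t)) (Real.exp (-κ * τ) * (-κ)) τ := by
      simpa [mul_comm] using ((hasDerivAt_id τ).const_mul (-κ)).exp
    have he2 : HasDerivAt (fun t : ℝ => Real.exp (-2 * κ * t))
        (Real.exp (-2 * κ * τ) * (-2 * κ)) τ := by
      simpa [mul_comm] using ((hasDerivAt_id τ).const_mul (-2 * κ)).exp
    have hA : HasDerivAt (fun t => (1 - Real.exp (-κ * t)) / κ ^ 3
        - t * Real.exp (-κ * t) / κ ^ 2 - t ^ 2 * Real.exp (-κ * t) / (2 * κ))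
        ((0 - Real.exp (-κ * τ) * (-κ)) / κ ^ 3
          - (1 * Real.exp (-κ * τ) + τ * (Real.exp (-κ * τ) * (-κ))) / κ ^ 2
          - ((2 : ℕ) * τ ^ (2 - 1) * Real.exp (-κ * τ)
              + τ ^ 2 * (Real.exp (-κ * τ) * (-κ))) / (2 * κ)) τ :=
      ((((hasDerivAt_const τ (1 : ℝ)).sub he).div_const (κ ^ 3)).sub
        (((hasDerivAt_id τ).mul he).div_const (κ ^ 2))).sub
        (((hasDerivAt_pow 2 τ).mul he).div_const (2 * κ))
    have hB : HasDerivAt (fun t => (1 - Real.exp (-2 * κ * t)) / κ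
        - 2 * t * Real.exp (-2 * κ * t / 2))
        ((0 - Real.exp (-2 * κ * τ) * (-2 * κ)) / κ
          - ((2 : ℝ) * 1 * Real.exp (-2 * κ * τ / 2)
            + 2 * τ * (Real.exp (-2 * κ * τ / 2) * (-2 * κ / 2)))) τ := by
      have heh : HasDerivAt (fun t : ℝ => Real.exp (-2 * κ * t / 2))
          (Real.exp (-2 * κ * τ / 2) * (-2 * κ / 2)) τ := by
        simpa [mul_comm, mul_div_assoc] using
          (((hasDerivAt_id τ).const_mul (-2 * κ)).div_const 2).exp
      exact (((hasDerivAt_const τ (1 : ℝ)).sub he2).div_const κ).sub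
        ((((hasDerivAt_id τ).const_mul 2).mul heh))
    rw [hfun]
    have hfull := (hA.const_mul (ω ^ 2 * γ * (a ^ 4 * ρ ^ 2 * ξ ^ 2))).add
      (hB.const_mul (γ ^ 2 * (a ^ 4 * (ξ ^ 2 / (2 * κ ^ 2)))))
    convert hfull using 1
    · rfl
    · rfl
    · rfl
    have h2 : -2 * κ * τ / 2 = -κ * τ := by ring
    have hexp : Real.exp (-2 * κ * τ) = Real.exp (-κ * τ) ^ 2 := by
      rw [sq, ← Real.exp_add]; ring_nf
    simp only [hB1, hB0, h2, hexp]
    push_cast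
    norm_num
    have hκ' : κ ≠ 0 := ne_of_gt hκ
    field_simp
    ring
  · rw [hB2, hcalB2, hcalB3]
    norm_num
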